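/- For every integer r ≥ 2, the generating series S_{3,a} of the 3-colored partitions of type 3.a satisfies S_{3,a} = H·(2q−1)/(q)_1 + 1. -/

import Mathlib

open PowerSeries Finset

/-- `l` is (the list of parts, in non-increasing order, of) an integer partition. -/
def IsPtn (l : List ℕ) : Prop := l.Pairwise (· ≥ ·) ∧ ∀ x ∈ l, 0 < x

/-- the smallest part of a partition (listed in non-increasing order). -/
def Kpart (l : List ℕ) : ℕ := l.getD (l.length - 1) 0

/-- the `k`-th smallest part of a partition (listed in non-increasing order). -/
def Ikpart (l : List ℕ) (k : ℕ) : ℕ := l.getD (l.length - k) 0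

/-- `H`, the generating series of the partition function. -/
noncomputable def Hq : PowerSeries ℚ :=
  PowerSeries.mk fun n => (Set.ncard {l : List ℕ | IsPtn l ∧ l.sum = n} : ℚ)

/-- `(q)_n = (1−q)(1−q²)⋯(1−qⁿ)`, with `(q)_0 = 1`. -/
noncomputable def qPoch (n : ℕ) : PowerSeries ℚ :=
  ∏ j ∈ Finset.range n, (1 - (X : PowerSeries ℚ) ^ (j + 1))

/-- generating series counting 3-colored partitions (triples of partitions) satisfying `P`,
by total size. -/
noncomputable def cseries (P : List ℕ → List ℕ → List ℕ → Prop) : PowerSeries ℚ :=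
  PowerSeries.mk fun n =>
    (Set.ncard {t : List ℕ × List ℕ × List ℕ |
        P t.1 t.2.1 t.2.2 ∧ t.1.sum + t.2.1.sum + t.2.2.sum = n} : ℚ)

/-- type 3.a: black and red parts non-empty, no green parts, `1 ≤ ℓ_r ≤ k−1`. -/
def Type3a (b rd g : List ℕ) : Prop :=
  IsPtn b ∧ IsPtn rd ∧ IsPtn g ∧ b ≠ [] ∧ rd ≠ [] ∧ g = [] ∧
    1 ≤ rd.length ∧ rd.length ≤ Kpart b - 1

open List

/-- conjugate partition -/
def conj (l : List ℕ) : List ℕ :=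
  (List.range (l.headD 0)).map (fun i => l.countP (fun x => decide (i < x)))

lemma eq_of_perm_of_sorted' {l₁ l₂ : List ℕ} (h : l₁.Perm l₂) (h₁ : l₁.Pairwise (· ≥ ·))
    (h₂ : l₂.Pairwise (· ≥ ·)) : l₁ = l₂ :=
  List.Perm.eq_of_pairwise' h₁ h₂ h

lemma sorted_cons_ge {a : ℕ} {l : List ℕ} (h : (a :: l).Pairwise (· ≥ ·)) :
    l.Pairwise (· ≥ ·) ∧ ∀ x ∈ l, x ≤ a := by
  rw [List.pairwise_cons] at h; exact ⟨h.2, h.1⟩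

lemma countP_lt_iff {l : List ℕ} (hl : l.Pairwise (· ≥ ·)) (i : ℕ) {j : ℕ} (hj : j < l.length) :
    j < l.countP (fun x => decide (i < x)) ↔ i < l.get ⟨j, hj⟩ := by
  induction l generalizing j with
  | nil => simp at hj
  | cons a l ih =>
    obtain ⟨hs, hle⟩ := sorted_cons_ge hl
    rw [List.countP_cons]
    by_cases hia : i < a
    · have h1 : (if i < a then 1 else 0) = 1 := if_pos hia
      simp only [decide_eq_true_eq, h1]
      cases j with
      | zero => simpa using hia
      | succ j =>
        simp only [List.get_cons_succ]
        rw [Nat.add_lt_add_iff_right]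
        exact ih hs (by simpa using hj)
    · have hz : l.countP (fun x => decide (i < x)) = 0 := by
        rw [List.countP_eq_zero]
        intro x hx
        simpa using le_trans (hle x hx) (not_lt.mp hia)
      have h0 : (if i < a then 1 else 0) = 0 := if_neg hia
      simp only [decide_eq_true_eq, hz, h0, Nat.add_zero, Nat.zero_add]
      cases j with
      | zero => simpa using hia
      | succ j =>
        simp only [List.get_cons_succ]
        constructor
        · intro h; exact absurd h (by omega)
        · intro h
          have h2 : l.get ⟨j, by simpa using hj⟩ ≤ a :=
            hle _ (l.get_mem _)
          omega

lemma length_conj (l : List ℕ) : (conj l).length = l.headD 0 := by simp [conj]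

lemma get_conj (l : List ℕ) {i : ℕ} (hi : i < (conj l).length) :
    (conj l).get ⟨i, hi⟩ = l.countP (fun x => decide (i < x)) := by
  simp [conj]

lemma sorted_get_le {l : List ℕ} (hl : l.Pairwise (· ≥ ·)) {i j : ℕ} (hij : i ≤ j)
    (hj : j < l.length) : l.get ⟨j, hj⟩ ≤ l.get ⟨i, lt_of_le_of_lt hij hj⟩ := by
  rcases eq_or_lt_of_le hij with rfl | h
  · exact le_refl _
  · exact List.pairwise_iff_get.mp hl ⟨i, _⟩ ⟨j, _⟩ h

lemma sorted_get_le_headD {l : List ℕ} (hl : l.Pairwise (· ≥ ·)) {j : ℕ} (hj : j < l.length) :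
    l.get ⟨j, hj⟩ ≤ l.headD 0 := by
  cases l with
  | nil => simp at hj
  | cons a l => simpa using sorted_get_le hl (Nat.zero_le j) hj

lemma conj_sorted (l : List ℕ) : (conj l).Pairwise (· ≥ ·) := by
  rw [List.pairwise_iff_get]
  intro i j hij
  rw [get_conj, get_conj]
  exact List.countP_mono_left (fun x hx h => by
    simp only [decide_eq_true_eq] at *
    omega)

lemma conj_pos (l : List ℕ) : ∀ x ∈ conj l, 0 < x := by
  intro x hx
  rw [conj, List.mem_map] at hx
  obtain ⟨i, hi, rfl⟩ := hx
  rw [List.mem_range] at hi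
  rw [List.countP_pos_iff]
  cases l with
  | nil => simp at hi
  | cons a l => exact ⟨a, List.mem_cons_self, by simpa using hi⟩

lemma isPtn_conj (l : List ℕ) (h : l.Pairwise (· ≥ ·)) : IsPtn (conj l) :=
  ⟨conj_sorted l, conj_pos l⟩

lemma sum_map_range (f : ℕ → ℕ) (n : ℕ) :
    ((List.range n).map f).sum = ∑ i ∈ Finset.range n, f i := by
  induction n with
  | zero => simp
  | succ n ih =>
    rw [List.range_succ, List.map_append, List.sum_append, Finset.sum_range_succ, ih]; simp

lemma sum_countP_aux (l : List ℕ) (B : ℕ) (h : ∀ x ∈ l, x ≤ B) :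
    ∑ i ∈ Finset.range B, l.countP (fun x => decide (i < x)) = l.sum := by
  induction l with
  | nil => simp
  | cons a l ih =>
    have ha : a ≤ B := h a (List.mem_cons_self)
    have hl : ∀ x ∈ l, x ≤ B := fun x hx => h x (List.mem_cons_of_mem a hx)
    simp only [List.countP_cons, List.sum_cons]
    rw [Finset.sum_add_distrib, ih hl]
    have : ∑ i ∈ Finset.range B, (if decide (i < a) = true then 1 else 0) = a := by
      simp only [decide_eq_true_eq]
      rw [Finset.sum_boole]
      have : (Finset.range B).filter (fun i => i < a) = Finset.range a := by
        ext i; simp; omega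
      simp [this]
    omega

lemma sum_conj {l : List ℕ} (hl : l.Pairwise (· ≥ ·)) : (conj l).sum = l.sum := by
  rw [conj, sum_map_range]
  apply sum_countP_aux
  intro x hx
  cases l with
  | nil => simp at hx
  | cons a l =>
    rcases List.mem_cons.mp hx with rfl | hx
    · simp
    · simpa using (sorted_cons_ge hl).2 x hx

lemma headD_eq_get {l : List ℕ} (h : l ≠ []) :
    l.headD 0 = l.get ⟨0, List.length_pos_iff.mpr h⟩ := by
  cases l with
  | nil => simp at h
  | cons a t => rfl

lemma countP_length_of_pos {l : List ℕ} (h : ∀ x ∈ l, 0 < x) :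
    l.countP (fun x => decide (0 < x)) = l.length := by
  rw [List.countP_eq_length]
  intro x hx
  simpa using h x hx

lemma headD_conj {l : List ℕ} (h : ∀ x ∈ l, 0 < x) : (conj l).headD 0 = l.length := by
  cases l with
  | nil => simp [conj]
  | cons a t =>
    have ha : 0 < a := h a (List.mem_cons_self)
    have hne : conj (a :: t) ≠ [] := by
      intro hc
      have := length_conj (a :: t)
      rw [hc] at this
      simp at this
      omega
    rw [headD_eq_get hne, get_conj]
    exact countP_length_of_pos h

lemma countP_range_lt (n m : ℕ) :
    (List.range n).countP (fun i => decide (i < m)) = min m n := by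
  induction n with
  | zero => simp
  | succ n ih =>
    rw [List.range_succ, List.countP_append, ih]
    by_cases h : n < m <;> simp [h] <;> omega

lemma conj_conj {l : List ℕ} (hl : IsPtn l) : conj (conj l) = l := by
  obtain ⟨hs, hp⟩ := hl
  apply List.ext_get
  · rw [length_conj, headD_conj hp]
  · intro j h1 h2
    rw [get_conj]
    rw [conj, List.countP_map]
    have hmax : l.get ⟨j, h2⟩ ≤ l.headD 0 := sorted_get_le_headD hs h2
    rw [List.countP_congr (q := fun i => decide (i < l.get ⟨j, h2⟩))
      (fun i _ => by simpa [Function.comp] using (countP_lt_iff hs i h2)), countP_range_lt]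
    omega

lemma kpart_eq_get {l : List ℕ} (h : l ≠ []) :
    Kpart l = l.get ⟨l.length - 1, by
      have := List.length_pos_iff.mpr h; omega⟩ := by
  rw [Kpart, List.getD_eq_getElem l 0 (by have := List.length_pos_iff.mpr h; omega)]
  simp

lemma kpart_mem {l : List ℕ} (h : l ≠ []) : Kpart l ∈ l := by
  rw [kpart_eq_get h]; exact l.get_mem _

lemma kpart_le {l : List ℕ} (hs : l.Pairwise (· ≥ ·)) {x : ℕ} (hx : x ∈ l) : Kpart l ≤ x := by
  have hne : l ≠ [] := by rintro rfl; simp at hx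
  obtain ⟨j, hj⟩ := List.get_of_mem hx
  rw [kpart_eq_get hne, ← hj]
  obtain ⟨j, hjl⟩ := j
  exact sorted_get_le hs (by omega) _

lemma kpart_pos {l : List ℕ} (hl : IsPtn l) (h : l ≠ []) : 0 < Kpart l :=
  hl.2 _ (kpart_mem h)

lemma mem_le_headD {l : List ℕ} (hs : l.Pairwise (· ≥ ·)) {x : ℕ} (hx : x ∈ l) :
    x ≤ l.headD 0 := by
  cases l with
  | nil => simp at hx
  | cons a t =>
    rcases List.mem_cons.mp hx with rfl | hx
    · simp
    · simpa using (sorted_cons_ge hs).2 x hx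

lemma isPtn_nil : IsPtn [] := ⟨List.Pairwise.nil, by simp⟩

lemma isPtn_sublist {l l' : List ℕ} (h : IsPtn l) (hs : l'.Sublist l) : IsPtn l' :=
  ⟨h.1.sublist hs, fun x hx => h.2 x (hs.mem hx)⟩

lemma sum_pos_of_ne_nil {l : List ℕ} (h : IsPtn l) (hne : l ≠ []) : 0 < l.sum := by
  cases l with
  | nil => simp at hne
  | cons a t =>
    have := h.2 a (List.mem_cons_self)
    simp only [List.sum_cons]
    omega

/-- The set of partitions of `n`. -/
def Pset (n : ℕ) : Set (List ℕ) := {l | IsPtn l ∧ l.sum = n}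

noncomputable def pn (n : ℕ) : ℕ := (Pset n).ncard

lemma finite_Pset (n : ℕ) : (Pset n).Finite := by
  rw [Set.finite_coe_iff.symm]
  apply Finite.of_injective (fun l => (⟨(↑(l.1) : Multiset ℕ),
      fun {i} hi => l.2.1.2 i (by simpa using hi), by simpa using l.2.2⟩ : Nat.Partition n))
  intro ⟨l₁, h₁⟩ ⟨l₂, h₂⟩ h
  simp only [Nat.Partition.mk.injEq, Multiset.coe_eq_coe] at h
  exact Subtype.ext (eq_of_perm_of_sorted' h h₁.1.1 h₂.1.1)

lemma Pset_zero : Pset 0 = {[]} := by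
  ext l
  simp only [Pset, Set.mem_setOf_eq, Set.mem_singleton_iff]
  constructor
  · rintro ⟨hl, hsum⟩
    cases l with
    | nil => rfl
    | cons a t =>
      have := hl.2 a (List.mem_cons_self)
      simp only [List.sum_cons] at hsum
      omega
  · rintro rfl
    exact ⟨isPtn_nil, rfl⟩

lemma pn_zero : pn 0 = 1 := by rw [pn, Pset_zero, Set.ncard_singleton]

/-- marked partitions -/
def Mset (n : ℕ) : Set (List ℕ × ℕ) := {p | IsPtn p.1 ∧ p.1.sum = n ∧ p.2 ∈ p.1}

/-- pairs (j, μ) with μ ⊢ n - j -/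
def Bset (n : ℕ) : Set (ℕ × List ℕ) := {p | 1 ≤ p.1 ∧ IsPtn p.2 ∧ p.2.sum + p.1 = n}

lemma finite_Mset (n : ℕ) : (Mset n).Finite := by
  apply Set.Finite.subset ((finite_Pset n).prod (Set.finite_Iic n))
  rintro ⟨l, v⟩ ⟨h1, h2, h3⟩
  exact ⟨⟨h1, h2⟩, by
    simp only [Set.mem_Iic]
    calc v ≤ l.sum := List.single_le_sum (fun x _ => Nat.zero_le x) v h3
    _ = n := h2⟩

lemma erase_insert_eq {j : ℕ} {μ : List ℕ} (hμ : μ.Pairwise (· ≥ ·)) :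
    (List.orderedInsert (· ≥ ·) j μ).erase j = μ := by
  exact eq_of_perm_of_sorted' (((List.perm_orderedInsert _ j μ).erase j).trans (by simp))
    ((List.Pairwise.orderedInsert j μ hμ).sublist (List.erase_sublist)) hμ

lemma insert_erase_eq {v : ℕ} {l : List ℕ} (hl : l.Pairwise (· ≥ ·)) (hv : v ∈ l) :
    List.orderedInsert (· ≥ ·) v (l.erase v) = l := by
  exact eq_of_perm_of_sorted'
    ((List.perm_orderedInsert _ v _).trans (List.perm_cons_erase hv).symm)
    (List.Pairwise.orderedInsert v _ (hl.sublist (List.erase_sublist))) hl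

lemma mB_bij (n : ℕ) :
    (fun p : List ℕ × ℕ => (p.2, p.1.erase p.2)) '' Mset n = Bset n ∧
      (Mset n).InjOn (fun p : List ℕ × ℕ => (p.2, p.1.erase p.2)) := by
  constructor
  · ext ⟨j, μ⟩
    simp only [Set.mem_image, Mset, Bset, Set.mem_setOf_eq, Prod.mk.injEq, Prod.exists]
    constructor
    · rintro ⟨l, v, ⟨h1, h2, h3⟩, rfl, rfl⟩
      refine ⟨h1.2 v h3, isPtn_sublist h1 (List.erase_sublist), ?_⟩
      have := (List.perm_cons_erase h3).sum_eq
      simp only [List.sum_cons] at this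
      omega
    · rintro ⟨h1, h2, h3⟩
      refine ⟨List.orderedInsert (· ≥ ·) j μ, j, ⟨⟨List.Pairwise.orderedInsert j μ h2.1, ?_⟩, ?_, ?_⟩,
        rfl, erase_insert_eq h2.1⟩
      · intro x hx
        have := (List.perm_orderedInsert (· ≥ ·) j μ).mem_iff.mp hx
        rcases List.mem_cons.mp this with rfl | hx'
        · omega
        · exact h2.2 x hx'
      · have := (List.perm_orderedInsert (· ≥ ·) j μ).sum_eq
        simp only [List.sum_cons] at this
        omega
      · exact (List.perm_orderedInsert (· ≥ ·) j μ).mem_iff.mpr (List.mem_cons_self)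
  · rintro ⟨l₁, v₁⟩ ⟨h1, _, h3⟩ ⟨l₂, v₂⟩ ⟨h4, _, h6⟩ h
    simp only [Prod.mk.injEq] at h
    obtain ⟨rfl, herase⟩ := h
    refine Prod.ext ?_ rfl
    calc l₁ = List.orderedInsert (· ≥ ·) v₁ (l₁.erase v₁) := (insert_erase_eq h1.1 h3).symm
    _ = List.orderedInsert (· ≥ ·) v₁ (l₂.erase v₁) := by rw [herase]
    _ = l₂ := insert_erase_eq h4.1 h6

def Tset (n : ℕ) : Set (List ℕ × List ℕ) :=
  {p | IsPtn p.1 ∧ IsPtn p.2 ∧ p.1 ≠ [] ∧ p.2 ≠ [] ∧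
    p.2.length ≤ Kpart p.1 - 1 ∧ p.1.sum + p.2.sum = n}

def T'set (n : ℕ) : Set (List ℕ × List ℕ) :=
  {p | IsPtn p.1 ∧ IsPtn p.2 ∧ p.1 ≠ [] ∧ p.2 ≠ [] ∧
    p.2.headD 0 < Kpart p.1 ∧ p.1.sum + p.2.sum = n}

lemma takeWhile_append_all {p : ℕ → Bool} {l1 l2 : List ℕ} (h : ∀ x ∈ l1, p x = true) :
    (l1 ++ l2).takeWhile p = l1 ++ l2.takeWhile p := by
  induction l1 with
  | nil => simp
  | cons a t ih =>
    have ha := h a (List.mem_cons_self)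
    simp only [List.cons_append, List.takeWhile_cons, ha, if_true]
    rw [ih (fun x hx => h x (List.mem_cons_of_mem a hx))]

lemma dropWhile_append_all {p : ℕ → Bool} {l1 l2 : List ℕ} (h : ∀ x ∈ l1, p x = true) :
    (l1 ++ l2).dropWhile p = l2.dropWhile p := by
  induction l1 with
  | nil => simp
  | cons a t ih =>
    have ha := h a (List.mem_cons_self)
    simp only [List.cons_append, List.dropWhile_cons, ha, if_true]
    exact ih (fun x hx => h x (List.mem_cons_of_mem a hx))

lemma dropWhile_lt {l : List ℕ} (hs : l.Pairwise (· ≥ ·)) (v : ℕ) :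
    ∀ y ∈ l.dropWhile (fun x => decide (v ≤ x)), y < v := by
  intro y hy
  set d := l.dropWhile (fun x => decide (v ≤ x)) with hd
  have hdne : d ≠ [] := by rintro h; rw [h] at hy; simp at hy
  have hds : d.Pairwise (· ≥ ·) := hs.sublist (List.dropWhile_suffix _).sublist
  have hhead : ¬ (v ≤ d.get ⟨0, List.length_pos_iff.mpr hdne⟩) := by
    have := List.dropWhile_get_zero_not (fun x => decide (v ≤ x)) l
      (by rw [← hd]; exact List.length_pos_iff.mpr hdne)
    simpa using this
  have := mem_le_headD hds hy
  rw [headD_eq_get hdne] at this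
  omega

lemma split_mem {n : ℕ} {l : List ℕ} {v : ℕ} (h : (l, v) ∈ Mset n) (hv : v ≠ Kpart l) :
    ((l.takeWhile (fun x => decide (v ≤ x)), l.dropWhile (fun x => decide (v ≤ x))) ∈ T'set n) ∧
      l.takeWhile (fun x => decide (v ≤ x)) ++ l.dropWhile (fun x => decide (v ≤ x)) = l ∧
      Kpart (l.takeWhile (fun x => decide (v ≤ x))) = v := by
  obtain ⟨hl, hsum, hmem⟩ := h
  set t := l.takeWhile (fun x => decide (v ≤ x)) with ht
  set d := l.dropWhile (fun x => decide (v ≤ x)) with hd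
  have happ : t ++ d = l := by rw [ht, hd]; exact List.takeWhile_append_dropWhile
  have htmem : ∀ x ∈ t, v ≤ x := fun x hx => by
    simpa using List.mem_takeWhile_imp hx
  have hdlt : ∀ y ∈ d, y < v := dropWhile_lt hl.1 v
  have hvt : v ∈ t := by
    have hm2 : v ∈ t ++ d := by rw [happ]; exact hmem
    rcases List.mem_append.mp hm2 with h' | h'
    · exact h'
    · exact absurd (hdlt v h') (lt_irrefl v)
  have htne : t ≠ [] := by rintro h'; rw [h'] at hvt; simp at hvt
  have hkt : Kpart t = v := le_antisymm
    (kpart_le (hl.1.sublist (List.takeWhile_prefix _).sublist) hvt)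
    (htmem _ (kpart_mem htne))
  have hne : l ≠ [] := by rintro rfl; simp at hmem
  have hkl : Kpart l < v := lt_of_le_of_ne (kpart_le hl.1 hmem) (Ne.symm hv)
  have hdne : d ≠ [] := by
    have hm2 : Kpart l ∈ t ++ d := by rw [happ]; exact kpart_mem hne
    have : Kpart l ∈ d := by
      rcases List.mem_append.mp hm2 with h' | h'
      · exact absurd (htmem _ h') (by omega)
      · exact h'
    rintro h'; rw [h'] at this; simp at this
  have hdptn : IsPtn d := isPtn_sublist hl (List.dropWhile_suffix _).sublist
  have htptn : IsPtn t := isPtn_sublist hl (List.takeWhile_prefix _).sublist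
  refine ⟨⟨htptn, hdptn, htne, hdne, ?_, by rw [← List.sum_append, happ]; exact hsum⟩, happ, hkt⟩
  rw [hkt]
  exact hdlt _ (by rw [headD_eq_get hdne]; exact d.get_mem _)

lemma glue_mem {n : ℕ} {b s : List ℕ} (h : (b, s) ∈ T'set n) :
    ((b ++ s, Kpart b) ∈ Mset n) ∧ Kpart b ≠ Kpart (b ++ s) ∧
      (b ++ s).takeWhile (fun x => decide (Kpart b ≤ x)) = b ∧
      (b ++ s).dropWhile (fun x => decide (Kpart b ≤ x)) = s := by
  obtain ⟨hb, hs, hbne, hsne, hhead, hsum⟩ := h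
  dsimp only at hb hs hbne hsne hhead hsum
  have hble : ∀ x ∈ b, Kpart b ≤ x := fun x hx => kpart_le hb.1 hx
  have hslt : ∀ y ∈ s, y < Kpart b := fun y hy =>
    lt_of_le_of_lt (mem_le_headD hs.1 hy) hhead
  have hsorted : (b ++ s).Pairwise (· ≥ ·) := by
    rw [List.pairwise_append]
    exact ⟨hb.1, hs.1, fun x hx y hy => le_of_lt (lt_of_lt_of_le (hslt y hy) (hble x hx))⟩
  have hptn : IsPtn (b ++ s) := ⟨hsorted, fun x hx => by
    rcases List.mem_append.mp hx with h' | h'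
    · exact hb.2 x h'
    · exact hs.2 x h'⟩
  have hmem : Kpart b ∈ b ++ s := List.mem_append.mpr (Or.inl (kpart_mem hbne))
  have happne : b ++ s ≠ [] := by
    rintro h'; rw [List.append_eq_nil_iff] at h'; exact hbne h'.1
  have hkne : Kpart b ≠ Kpart (b ++ s) := by
    have h1 : Kpart (b ++ s) ≤ s.headD 0 :=
      kpart_le hsorted (List.mem_append.mpr (Or.inr (by
        rw [headD_eq_get hsne]; exact s.get_mem _)))
    omega
  refine ⟨⟨hptn, by rw [List.sum_append]; exact hsum, hmem⟩, hkne, ?_, ?_⟩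
  · rw [takeWhile_append_all (fun x hx => by simpa using hble x hx)]
    cases s with
    | nil => simp at hsne
    | cons a s' =>
      have : ¬ (Kpart b ≤ a) := by
        have := hslt a (List.mem_cons_self); omega
      simp [List.takeWhile_cons, this]
  · rw [dropWhile_append_all (fun x hx => by simpa using hble x hx)]
    cases s with
    | nil => simp at hsne
    | cons a s' =>
      have : ¬ (Kpart b ≤ a) := by
        have := hslt a (List.mem_cons_self); omega
      simp [List.dropWhile_cons, this]

lemma ncard_biUnion {α : Type*} (s : Finset ℕ) (f : ℕ → Set α)
    (hf : ∀ i ∈ s, (f i).Finite)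
    (hd : ∀ i ∈ s, ∀ j ∈ s, i ≠ j → Disjoint (f i) (f j)) :
    (⋃ i ∈ s, f i).ncard = ∑ i ∈ s, (f i).ncard := by
  classical
  induction s using Finset.induction with
  | empty => simp
  | insert a s hnotmem ih =>
    rw [Finset.set_biUnion_insert, Finset.sum_insert hnotmem]
    have hfin1 : (f a).Finite := hf a (Finset.mem_insert_self a s)
    have hfin2 : (⋃ i ∈ s, f i).Finite :=
      Set.Finite.biUnion s.finite_toSet
        (fun i hi => hf i (Finset.mem_insert_of_mem hi))
    rw [Set.ncard_union_eq ?_ hfin1 hfin2, ih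
      (fun i hi => hf i (Finset.mem_insert_of_mem hi))
      (fun i hi j hj hij => hd i (Finset.mem_insert_of_mem hi) j
        (Finset.mem_insert_of_mem hj) hij)]
    rw [Set.disjoint_iUnion₂_right]
    intro i hi
    exact hd a (Finset.mem_insert_self a s) i (Finset.mem_insert_of_mem hi)
      (fun h => hnotmem (h ▸ hi))

lemma ncard_Bset (n : ℕ) : (Bset n).ncard = ∑ k ∈ Finset.range n, pn k := by
  have hB : Bset n = ⋃ j ∈ Finset.Icc 1 n, (fun μ => (j, μ)) '' Pset (n - j) := by
    ext ⟨j, μ⟩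
    simp only [Bset, Set.mem_setOf_eq, Set.mem_iUnion, Set.mem_image, Finset.mem_Icc, Pset,
      Prod.mk.injEq]
    constructor
    · rintro ⟨h1, h2, h3⟩
      exact ⟨j, ⟨h1, by omega⟩, μ, ⟨h2, by omega⟩, rfl, rfl⟩
    · rintro ⟨i, ⟨hi1, hi2⟩, ν, ⟨hν1, hν2⟩, rfl, rfl⟩
      exact ⟨hi1, hν1, by omega⟩
  rw [hB, ncard_biUnion]
  · rw [Finset.sum_congr rfl (fun j _ => Set.ncard_image_of_injOn
      (fun x _ y _ h => by simpa using h))]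
    apply Finset.sum_nbij' (i := fun j => n - j) (j := fun k => n - k)
    · intro a ha; rw [Finset.mem_Icc] at ha; rw [Finset.mem_range]; omega
    · intro a ha; rw [Finset.mem_range] at ha; rw [Finset.mem_Icc]; omega
    · intro a ha; rw [Finset.mem_Icc] at ha; omega
    · intro a ha; rw [Finset.mem_range] at ha; omega
    · intro a _; rfl
  · exact fun i _ => ((finite_Pset (n - i)).image _)
  · intro i _ j _ hij
    rw [Set.disjoint_left]
    rintro ⟨a, b⟩ ha hb
    simp only [Set.mem_image] at ha hb
    obtain ⟨_, _, h1⟩ := ha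
    obtain ⟨_, _, h2⟩ := hb
    rw [Prod.mk.injEq] at h1 h2
    exact hij (h1.1.trans h2.1.symm)

lemma ncard_Mset_eq_Bset (n : ℕ) : (Mset n).ncard = (Bset n).ncard := by
  obtain ⟨him, hinj⟩ := mB_bij n
  rw [← him, Set.ncard_image_of_injOn hinj]

lemma ncard_Mset_split (n : ℕ) (hn : 1 ≤ n) :
    (Mset n).ncard = pn n + (T'set n).ncard := by
  classical
  set M1 : Set (List ℕ × ℕ) := {p ∈ Mset n | p.2 = Kpart p.1} with hM1
  set M2 : Set (List ℕ × ℕ) := {p ∈ Mset n | p.2 ≠ Kpart p.1} with hM2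
  have hunion : Mset n = M1 ∪ M2 := by
    ext p; simp only [hM1, hM2, Set.mem_union, Set.mem_setOf_eq]; tauto
  have hdisj : Disjoint M1 M2 := by
    rw [Set.disjoint_left]; rintro p ⟨_, h1⟩ ⟨_, h2⟩; exact h2 h1
  have hfin := finite_Mset n
  rw [hunion, Set.ncard_union_eq hdisj
    (hfin.subset (fun p hp => hp.1)) (hfin.subset (fun p hp => hp.1))]
  congr 1
  · -- M1 ≃ Pset n via fst
    have him : Prod.fst '' M1 = Pset n := by
      ext l
      simp only [Set.mem_image, hM1, Set.mem_setOf_eq, Mset, Pset]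
      constructor
      · rintro ⟨⟨l', v⟩, ⟨⟨h1, h2, _⟩, _⟩, rfl⟩
        exact ⟨h1, h2⟩
      · rintro ⟨h1, h2⟩
        have hne : l ≠ [] := by
          rintro rfl; rw [List.sum_nil] at h2; omega
        exact ⟨(l, Kpart l), ⟨⟨h1, h2, kpart_mem hne⟩, rfl⟩, rfl⟩
    have hinj : M1.InjOn Prod.fst := by
      rintro ⟨l₁, v₁⟩ ⟨_, h1⟩ ⟨l₂, v₂⟩ ⟨_, h2⟩ h
      simp only at h h1 h2
      subst h; rw [Prod.mk.injEq]
      exact ⟨rfl, h1.trans h2.symm⟩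
    rw [pn, ← him, Set.ncard_image_of_injOn hinj]
  · -- M2 ≃ T'set n
    set G : List ℕ × ℕ → List ℕ × List ℕ := fun p =>
      (p.1.takeWhile (fun x => decide (p.2 ≤ x)), p.1.dropWhile (fun x => decide (p.2 ≤ x)))
      with hG
    have him : G '' M2 = T'set n := by
      ext ⟨b, s⟩
      constructor
      · rintro ⟨⟨l, v⟩, ⟨hmem, hne⟩, heq⟩
        obtain ⟨h1, _, _⟩ := split_mem hmem hne
        rw [← heq]; exact h1
      · intro h
        obtain ⟨hmem, hkne, ht, hd⟩ := glue_mem h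
        refine ⟨(b ++ s, Kpart b), ⟨hmem, hkne⟩, ?_⟩
        rw [hG]; simp only
        rw [ht, hd]
    have hinj : M2.InjOn G := by
      rintro ⟨l₁, v₁⟩ ⟨hm1, hne1⟩ ⟨l₂, v₂⟩ ⟨hm2, hne2⟩ h
      obtain ⟨_, happ1, hk1⟩ := split_mem hm1 hne1
      obtain ⟨_, happ2, hk2⟩ := split_mem hm2 hne2
      rw [hG] at h
      simp only [Prod.mk.injEq] at h
      obtain ⟨e1, e2⟩ := h
      rw [Prod.mk.injEq]
      constructor
      · rw [← happ1, ← happ2, e1, e2]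
      · rw [← hk1, ← hk2, e1]
    rw [← him, Set.ncard_image_of_injOn hinj]

lemma conj_ne_nil {l : List ℕ} (hl : IsPtn l) (hne : l ≠ []) : conj l ≠ [] := by
  intro h
  have h1 := length_conj l
  rw [h, List.length_nil] at h1
  cases l with
  | nil => exact hne rfl
  | cons a t =>
    have := hl.2 a (List.mem_cons_self)
    simp only [List.headD_cons] at h1
    omega

lemma headD_pos {l : List ℕ} (hl : IsPtn l) (hne : l ≠ []) : 0 < l.headD 0 := by
  cases l with
  | nil => exact absurd rfl hne
  | cons a t => exact hl.2 a (List.mem_cons_self)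

lemma ncard_Tset_eq (n : ℕ) : (Tset n).ncard = (T'set n).ncard := by
  set F : List ℕ × List ℕ → List ℕ × List ℕ := fun p => (p.1, conj p.2) with hF
  have him : F '' T'set n = Tset n := by
    ext ⟨b, r⟩
    constructor
    · rintro ⟨⟨b', s⟩, hmem, heq⟩
      obtain ⟨hb, hs, hbne, hsne, hhead, hsum⟩ := hmem
      dsimp only at hb hs hbne hsne hhead hsum
      rw [hF] at heq
      simp only [Prod.mk.injEq] at heq
      obtain ⟨rfl, rfl⟩ := heq
      refine ⟨hb, isPtn_conj s hs.1, hbne, conj_ne_nil hs hsne, ?_,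
        by rw [sum_conj hs.1]; exact hsum⟩
      have h1 : (conj s).length = s.headD 0 := length_conj s
      dsimp only
      omega
    · rintro ⟨hb, hr, hbne, hrne, hlen, hsum⟩
      dsimp only at hb hr hbne hrne hlen hsum
      have hK : 0 < Kpart b := kpart_pos hb hbne
      refine ⟨(b, conj r), ⟨hb, isPtn_conj r hr.1, hbne, conj_ne_nil hr hrne, ?_,
        by dsimp only; rw [sum_conj hr.1]; exact hsum⟩, ?_⟩
      · dsimp only
        rw [headD_conj hr.2]
        have : 1 ≤ r.length := List.length_pos_iff.mpr hrne
        omega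
      · rw [hF]
        simp only [Prod.mk.injEq]
        exact ⟨trivial, conj_conj hr⟩
  have hinj : (T'set n).InjOn F := by
    rintro ⟨b₁, s₁⟩ h1 ⟨b₂, s₂⟩ h2 h
    rw [hF] at h
    simp only [Prod.mk.injEq] at h
    obtain ⟨rfl, hcs⟩ := h
    rw [Prod.mk.injEq]
    refine ⟨rfl, ?_⟩
    calc s₁ = conj (conj s₁) := (conj_conj h1.2.1).symm
    _ = conj (conj s₂) := by rw [hcs]
    _ = s₂ := conj_conj h2.2.1
  rw [← him, Set.ncard_image_of_injOn hinj]

def tripleSet (n : ℕ) : Set (List ℕ × List ℕ × List ℕ) :=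
  {t | Type3a t.1 t.2.1 t.2.2 ∧ t.1.sum + t.2.1.sum + t.2.2.sum = n}

lemma ncard_tripleSet_eq (n : ℕ) : (tripleSet n).ncard = (Tset n).ncard := by
  set F : List ℕ × List ℕ → List ℕ × List ℕ × List ℕ := fun p => (p.1, p.2, []) with hF
  have him : F '' Tset n = tripleSet n := by
    ext ⟨b, r, g⟩
    constructor
    · rintro ⟨⟨b', r'⟩, hmem, heq⟩
      obtain ⟨h1, h2, h3, h4, h5, h6⟩ := hmem
      dsimp only at h1 h2 h3 h4 h5 h6
      rw [hF] at heq
      simp only [Prod.mk.injEq] at heq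
      obtain ⟨rfl, rfl, rfl⟩ := heq
      exact ⟨⟨h1, h2, isPtn_nil, h3, h4, rfl, List.length_pos_iff.mpr h4, h5⟩, by simpa using h6⟩
    · rintro ⟨⟨h1, h2, _, h4, h5, hg, _, h8⟩, hsum⟩
      dsimp only at h1 h2 h4 h5 hg h8 hsum
      refine ⟨(b, r), ⟨h1, h2, h4, h5, h8, ?_⟩, ?_⟩
      · dsimp only
        rw [hg] at hsum
        simpa using hsum
      · rw [hF]
        simp only [Prod.mk.injEq]
        exact ⟨trivial, trivial, hg.symm⟩
  have hinj : (Tset n).InjOn F := by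
    rintro ⟨b₁, r₁⟩ _ ⟨b₂, r₂⟩ _ h
    rw [hF] at h
    simp only [Prod.mk.injEq] at h
    rw [Prod.mk.injEq]
    exact ⟨h.1, h.2.1⟩
  rw [← him, Set.ncard_image_of_injOn hinj]

lemma tripleSet_zero : tripleSet 0 = ∅ := by
  ext ⟨b, r, g⟩
  simp only [tripleSet, Set.mem_setOf_eq, Set.mem_empty_iff_false, iff_false, not_and]
  rintro ⟨h1, _, _, h4, _⟩
  have := sum_pos_of_ne_nil h1 h4
  omega

lemma main_count (n : ℕ) (hn : 1 ≤ n) :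
    (tripleSet n).ncard + pn n = ∑ k ∈ Finset.range n, pn k := by
  rw [ncard_tripleSet_eq, ncard_Tset_eq]
  have h1 := ncard_Mset_split n hn
  have h2 := ncard_Mset_eq_Bset n
  have h3 := ncard_Bset n
  omega

lemma coeff_Hq (n : ℕ) : (PowerSeries.coeff n) Hq = (pn n : ℚ) := by
  rw [Hq, PowerSeries.coeff_mk]; rfl

lemma qPoch_one : qPoch 1 = 1 - X := by
  rw [qPoch, Finset.prod_range_one, pow_one]

lemma geom_inv : PowerSeries.mk (fun _ => (1 : ℚ)) = (qPoch 1)⁻¹ := by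
  rw [qPoch_one, PowerSeries.eq_inv_iff_mul_eq_one (by simp)]
  ext n
  rw [mul_sub, mul_one, map_sub]
  cases n with
  | zero => simp
  | succ n => rw [PowerSeries.coeff_succ_mul_X]; simp [PowerSeries.coeff_mk, PowerSeries.coeff_one]

lemma coeff_D (m : ℕ) :
    (PowerSeries.coeff m) ((2 * (X : PowerSeries ℚ) - 1) * PowerSeries.mk (fun _ => (1:ℚ)))
      = if m = 0 then -1 else 1 := by
  rw [sub_mul, one_mul, map_sub, mul_assoc, two_mul, map_add]
  have hx : (PowerSeries.coeff m) ((X : PowerSeries ℚ) * PowerSeries.mk (fun _ => (1:ℚ)))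
      = if m = 0 then 0 else 1 := by
    cases m with
    | zero => simp
    | succ m => rw [PowerSeries.coeff_succ_X_mul]; simp
  rw [hx, PowerSeries.coeff_mk]
  by_cases h : m = 0 <;> simp [h]


/-- `S_{3,a} = H·(2q−1)/(q)_1 + 1`. -/
theorem S3a_eq (r : ℕ) (hr : 2 ≤ r) :
    cseries Type3a = Hq * (2 * (X : PowerSeries ℚ) - 1) * (qPoch 1)⁻¹ + 1 := by
  rw [← geom_inv, mul_assoc]
  ext n
  rw [map_add, PowerSeries.coeff_mul, Finset.Nat.sum_antidiagonal_eq_sum_range_succ_mk]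
  have hL : (PowerSeries.coeff n) (cseries Type3a) = ((tripleSet n).ncard : ℚ) := by
    rw [cseries, PowerSeries.coeff_mk]; rfl
  rw [hL]
  simp only [coeff_Hq, coeff_D]
  cases Nat.eq_zero_or_pos n with
  | inl h =>
    subst h
    rw [tripleSet_zero]
    simp [pn_zero, PowerSeries.coeff_zero_eq_constantCoeff]
  | inr hn =>
    have hone : (PowerSeries.coeff n) (1 : PowerSeries ℚ) = 0 := by
      rw [PowerSeries.coeff_one, if_neg (by omega)]
    rw [hone, add_zero, Finset.sum_range_succ]
    rw [Nat.sub_self, if_pos rfl]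
    have hterm : ∀ k ∈ Finset.range n,
        (pn k : ℚ) * (if n - k = 0 then (-1 : ℚ) else 1) = (pn k : ℚ) := by
      intro k hk
      rw [Finset.mem_range] at hk
      rw [if_neg (by omega), mul_one]
    rw [Finset.sum_congr rfl hterm]
    have hmain := main_count n hn
    have : ((tripleSet n).ncard : ℚ) + (pn n : ℚ) = ∑ k ∈ Finset.range n, (pn k : ℚ) := by
      rw [← Nat.cast_add, hmain]
      push_cast
      rfl
    linarith
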